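/- Let (B, W) and (B̃, W̃) be pairs of random variables (possibly on different probability spaces) with B = (B₀, B₁) and B̃ = (B̃₀, B̃₁) taking values in ℝ² and W, W̃ taking values in ℝ. Assume: (i) B is independent of W and B̃ is independent of W̃; (ii) the law of W equals the law of W̃ and has full support, i.e. assigns positive measure to every nonempty open subset of ℝ; (iii) the joint law of (B₀ + B₁·W, W) equals the joint law of (B̃₀ + B̃₁·W̃, W̃). Then the law of B equals the law of B̃. -/

import Mathlib

open MeasureTheory ProbabilityTheory Complex Metric Filter Set
open scoped Manifold FourierTransform RealInnerProductSpace Topology ENNReal NNReal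

noncomputable section AuxCW

local notation "EE" => EuclideanSpace ℝ (Fin 2)

/-- bounded ae-strongly-measurable functions are integrable w.r.t. finite measures -/
lemma aux_bdd_integrable {α G : Type*} [MeasurableSpace α] [NormedAddCommGroup G]
    {μ : Measure α} [IsFiniteMeasure μ] {f : α → G} (hf : AEStronglyMeasurable f μ)
    {C : ℝ} (h : ∀ x, ‖f x‖ ≤ C) : Integrable f μ :=
  (integrable_const C).mono' hf (Filter.Eventually.of_forall h)

/-- continuity of parametrized characteristic-type integrals -/
lemma aux_cont_char {α : Type*} [MeasurableSpace α] {μ : Measure α} [IsFiniteMeasure μ]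
    {X : Type*} [TopologicalSpace X] [FirstCountableTopology X]
    {g : X → α → ℝ} (hg : ∀ x, AEStronglyMeasurable (fun a => Complex.exp ((g x a : ℂ) * Complex.I)) μ)
    (hc : ∀ a, Continuous fun x => g x a) :
    Continuous fun x => ∫ a, Complex.exp ((g x a : ℂ) * Complex.I) ∂μ := by
  apply continuous_of_dominated hg (fun x => Filter.Eventually.of_forall (fun a => ?_))
    (integrable_const 1) (Filter.Eventually.of_forall fun a => ?_)
  · simp [Complex.norm_exp]
  · exact Complex.continuous_exp.comp ((Complex.continuous_ofReal.comp (hc a)).mul continuous_const)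

/-- norm bound on characteristic-type integrals w.r.t. probability measures -/
lemma aux_norm_char_le {α : Type*} [MeasurableSpace α] {μ : Measure α} [IsProbabilityMeasure μ]
    (g : α → ℝ) : ‖∫ a, Complex.exp ((g a : ℂ) * Complex.I) ∂μ‖ ≤ 1 := by
  have := norm_integral_le_of_norm_le_const (μ := μ)
    (f := fun a => Complex.exp ((g a : ℂ) * Complex.I)) (C := 1)
    (Filter.Eventually.of_forall fun a => by simp [Complex.norm_exp])
  simpa using this

lemma aux_exists_schwartz {f : EE → ℂ} (h1 : ContDiff ℝ (⊤:ℕ∞) f) (h2 : HasCompactSupport f) :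
    ∃ g : SchwartzMap (EuclideanSpace ℝ (Fin 2)) ℂ, ⇑g = f := by
  refine ⟨⟨f, h1, fun k n => ?_⟩, rfl⟩
  have hc : Continuous fun x : EE => ‖x‖ ^ k * ‖iteratedFDeriv ℝ n f x‖ :=
    (continuous_norm.pow k).mul (h1.continuous_iteratedFDeriv (by exact_mod_cast le_top)).norm
  have hcs : HasCompactSupport fun x : EE => ‖x‖ ^ k * ‖iteratedFDeriv ℝ n f x‖ := by
    have : HasCompactSupport fun x : EE => ‖iteratedFDeriv ℝ n f x‖ :=
      (h2.iteratedFDeriv n).comp_left norm_zero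
    exact this.mul_left
  obtain ⟨x₀, hx₀⟩ := hc.exists_forall_ge_of_hasCompactSupport hcs
  exact ⟨_, fun x => hx₀ x⟩

lemma aux_exists_bump (K : Set EE) (hK : IsCompact K) {δ : ℝ} (hδ : 0 < δ) :
    ∃ f : EE → ℝ, ContDiff ℝ (⊤:ℕ∞) f ∧ HasCompactSupport f ∧ Set.EqOn f 1 K ∧
      (∀ x, f x ∈ Set.Icc (0:ℝ) 1) ∧ Function.support f ⊆ Metric.thickening δ K := by
  obtain ⟨f, hf0, hf1, hf01⟩ := exists_contMDiffMap_zero_one_of_isClosed (𝓘(ℝ, EE)) (n := ⊤)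
    (Metric.isOpen_thickening).isClosed_compl hK.isClosed
    (disjoint_compl_left.mono_right (self_subset_thickening hδ K))
  have hsupp : Function.support f ⊆ Metric.thickening δ K := by
    intro x hx
    by_contra hxc
    exact hx (hf0 hxc)
  refine ⟨f, (f.contMDiff).contDiff, ?_, hf1, hf01, hsupp⟩
  exact HasCompactSupport.intro hK.cthickening
    (fun x hx => by
      by_contra hfx
      exact hx (thickening_subset_cthickening δ K (hsupp hfx)))


/-- Schwartz test functions integrate equally against measures with equal characteristic
functions. -/
lemma aux_schwartz_integral_eq {μ ν : Measure EE} [IsProbabilityMeasure μ] [IsProbabilityMeasure ν]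
    (h : ∀ ξ : EE, ∫ x, Complex.exp ((2 * Real.pi * ⟪x, ξ⟫ : ℝ) * Complex.I) ∂μ
               = ∫ x, Complex.exp ((2 * Real.pi * ⟪x, ξ⟫ : ℝ) * Complex.I) ∂ν)
    (g : SchwartzMap (EuclideanSpace ℝ (Fin 2)) ℂ) :
    ∫ x, g x ∂μ = ∫ x, g x ∂ν := by
  set F := SchwartzMap.fourierTransformCLM ℂ g with hFdef
  have hFg : ⇑F = 𝓕 ⇑g := by
    rw [hFdef, SchwartzMap.fourierTransformCLM_apply, SchwartzMap.fourier_coe]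
  have hinv : 𝓕⁻ (𝓕 ⇑g) = ⇑g :=
    g.continuous.fourierInv_fourier_eq g.integrable (hFg ▸ F.integrable)
  have comp : ∀ κ : Measure EE, IsProbabilityMeasure κ →
      ∫ x, g x ∂κ
        = ∫ ξ, (∫ x, Complex.exp ((2 * Real.pi * ⟪x, ξ⟫ : ℝ) * Complex.I) ∂κ) * F ξ := by
    intro κ hκ
    have hint : Integrable (fun z : EE × EE =>
        Complex.exp ((2 * Real.pi * ⟪z.2, z.1⟫ : ℝ) * Complex.I) * F z.2) (κ.prod volume) := by
      have hcont : Continuous (fun z : EE × EE =>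
          Complex.exp ((2 * Real.pi * ⟪z.2, z.1⟫ : ℝ) * Complex.I) * F z.2) := by
        apply Continuous.mul
        · exact Complex.continuous_exp.comp ((Complex.continuous_ofReal.comp
            (continuous_const.mul (continuous_inner.comp continuous_swap))).mul continuous_const)
        · exact F.continuous.comp continuous_snd
      rw [integrable_prod_iff hcont.aestronglyMeasurable]
      constructor
      · refine Filter.Eventually.of_forall fun x => ?_
        apply F.integrable.bdd_mul (c := 1)
        · exact (Complex.continuous_exp.comp ((Complex.continuous_ofReal.comp
            (continuous_const.mul (continuous_inner.comp (Continuous.prodMk_left x))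
              )).mul continuous_const)).aestronglyMeasurable
        · exact Filter.Eventually.of_forall fun ξ => by simp [Complex.norm_exp]
      · apply (integrable_const (∫ ξ, ‖F ξ‖)).congr
        refine Filter.Eventually.of_forall fun x => ?_
        simp [norm_mul, Complex.norm_exp]
    calc ∫ x, g x ∂κ = ∫ x, 𝓕⁻ (𝓕 ⇑g) x ∂κ := by rw [hinv]
      _ = ∫ x, (∫ ξ, Complex.exp ((2 * Real.pi * ⟪ξ, x⟫ : ℝ) * Complex.I) • (𝓕 ⇑g) ξ) ∂κ := by
          congr 1
          ext x
          exact Real.fourierInv_eq' _ _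
      _ = ∫ ξ, (∫ x, Complex.exp ((2 * Real.pi * ⟪ξ, x⟫ : ℝ) * Complex.I) • (𝓕 ⇑g) ξ ∂κ) := by
          apply integral_integral_swap
          simpa [smul_eq_mul, hFg, Function.uncurry_def] using hint
      _ = ∫ ξ, (∫ x, Complex.exp ((2 * Real.pi * ⟪x, ξ⟫ : ℝ) * Complex.I) ∂κ) * F ξ := by
          congr 1
          ext ξ
          rw [integral_smul_const, hFg]
          rw [smul_eq_mul]
          congr 1
          congr 1
          ext x
          rw [real_inner_comm]
  rw [comp μ inferInstance, comp ν inferInstance]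
  congr 1
  ext ξ
  rw [h ξ]

/-- Measures with equal characteristic functions agree on compact sets (one inequality). -/
lemma aux_meas_compact_le (μ ν : Measure EE) [IsProbabilityMeasure μ] [IsProbabilityMeasure ν]
    (key : ∀ g : SchwartzMap (EuclideanSpace ℝ (Fin 2)) ℂ, ∫ x, g x ∂μ = ∫ x, g x ∂ν)
    {K : Set EE} (hK : IsCompact K) : μ K ≤ ν K := by
  apply ge_of_tendsto ((tendsto_measure_cthickening_of_isClosed
    ⟨1, one_pos, measure_ne_top ν _⟩ hK.isClosed).mono_left
    (nhdsWithin_le_nhds (s := Set.Ioi (0:ℝ))))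
  filter_upwards [self_mem_nhdsWithin] with δ hδ
  obtain ⟨f, hsm, hcs, hf1, hf01, hsupp⟩ := aux_exists_bump K hK hδ
  have hbd : ∀ x, ‖f x‖ ≤ 1 := fun x => by
    rw [Real.norm_eq_abs, abs_le]; exact ⟨by linarith [(hf01 x).1], (hf01 x).2⟩
  have hfintμ : Integrable f μ := aux_bdd_integrable hsm.continuous.aestronglyMeasurable hbd
  have hfintν : Integrable f ν := aux_bdd_integrable hsm.continuous.aestronglyMeasurable hbd
  obtain ⟨g, hg⟩ := aux_exists_schwartz
    ((Complex.ofRealCLM.contDiff (n := (⊤:ℕ∞))).comp hsm) (hcs.comp_left Complex.ofReal_zero)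
  have h2 : ∫ x, f x ∂μ = ∫ x, f x ∂ν := by
    have hgf := key g
    rw [hg] at hgf
    simp only [Function.comp_apply, Complex.ofRealCLM_apply] at hgf
    have h1 : ∫ x, ((f x : ℂ)) ∂μ = ((∫ x, f x ∂μ : ℝ) : ℂ) := integral_ofReal
    have h2 : ∫ x, ((f x : ℂ)) ∂ν = ((∫ x, f x ∂ν : ℝ) : ℂ) := integral_ofReal
    rw [h1, h2] at hgf
    exact_mod_cast hgf
  have hμb : (μ K).toReal ≤ ∫ x, f x ∂μ := by
    have e1 : (μ K).toReal = ∫ _ in K, (1:ℝ) ∂μ := by simp [setIntegral_const, Measure.real]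
    rw [e1, show ∫ _ in K, (1:ℝ) ∂μ = ∫ x in K, f x ∂μ from
      setIntegral_congr_fun hK.isClosed.measurableSet (fun x hx => (hf1 hx).symm)]
    exact setIntegral_le_integral hfintμ (Filter.Eventually.of_forall fun x => (hf01 x).1)
  have hνb : ∫ x, f x ∂ν ≤ (ν (cthickening δ K)).toReal := by
    have e0 : ∫ x, f x ∂ν = ∫ x in cthickening δ K, f x ∂ν := by
      refine (setIntegral_eq_integral_of_forall_compl_eq_zero fun x hx => ?_).symm
      by_contra hfx
      exact hx (thickening_subset_cthickening δ K (hsupp hfx))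
    rw [e0]
    calc ∫ x in cthickening δ K, f x ∂ν ≤ ∫ _ in cthickening δ K, (1:ℝ) ∂ν :=
          setIntegral_mono_on hfintν.integrableOn (integrable_const 1).integrableOn
            isClosed_cthickening.measurableSet (fun x _ => (hf01 x).2)
      _ = (ν (cthickening δ K)).toReal := by simp [setIntegral_const, Measure.real]
  have := hμb.trans (h2 ▸ hνb)
  exact (ENNReal.toReal_le_toReal (measure_ne_top μ K) (measure_ne_top ν _)).mp this

/-- **Uniqueness of characteristic functions** on `EuclideanSpace ℝ (Fin 2)`. -/
lemma aux_ext_of_char (μ ν : Measure EE) [IsProbabilityMeasure μ] [IsProbabilityMeasure ν]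
    (h : ∀ ξ : EE, ∫ x, Complex.exp ((2 * Real.pi * ⟪x, ξ⟫ : ℝ) * Complex.I) ∂μ
               = ∫ x, Complex.exp ((2 * Real.pi * ⟪x, ξ⟫ : ℝ) * Complex.I) ∂ν) : μ = ν := by
  have key := aux_schwartz_integral_eq h
  have keyK : ∀ K : Set EE, IsCompact K → μ K = ν K := fun K hK =>
    le_antisymm (aux_meas_compact_le μ ν key hK)
      (aux_meas_compact_le ν μ (fun g => (key g).symm) hK)
  have keyC : ∀ C : Set EE, IsClosed C → μ C = ν C := by
    intro C hC
    have hmono : Monotone fun n : ℕ => C ∩ Metric.closedBall 0 n := fun m n hmn =>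
      inter_subset_inter_right C (closedBall_subset_closedBall (by exact_mod_cast hmn))
    have hU : (⋃ n : ℕ, C ∩ Metric.closedBall 0 n) = C := by
      rw [← inter_iUnion, iUnion_closedBall_nat, inter_univ]
    have h1 := tendsto_measure_iUnion_atTop (μ := μ) hmono
    have h2 := tendsto_measure_iUnion_atTop (μ := ν) hmono
    rw [hU] at h1 h2
    refine tendsto_nhds_unique (h1.congr fun n => ?_) h2
    exact keyK _ ((isCompact_closedBall 0 n).inter_left hC)
  refine MeasureTheory.ext_of_generate_finite {s : Set EE | IsClosed s} ?_ isPiSystem_isClosed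
    (fun s hs => keyC s hs) (by simp)
  rw [BorelSpace.measurable_eq (α := EE), borel_eq_generateFrom_isClosed]


/-- The "identification step": if the joint laws of `(B₀+B₁W, W)` agree (as pushforwards of
product measures), with full support mixing measure, then the 2d characteristic functions of the
coefficient laws agree. -/
lemma aux_char2_eq {μ μ' : Measure (ℝ × ℝ)} [IsProbabilityMeasure μ] [IsProbabilityMeasure μ']
    {ν : Measure ℝ} [IsProbabilityMeasure ν]
    (hs : ∀ U : Set ℝ, IsOpen U → U.Nonempty → 0 < ν U)
    (hj : (μ.prod ν).map (fun p => (p.1.1 + p.1.2 * p.2, p.2))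
        = (μ'.prod ν).map (fun p => (p.1.1 + p.1.2 * p.2, p.2))) :
    ∀ u v : ℝ, ∫ b, Complex.exp (((u * b.1 + v * b.2 : ℝ) : ℂ) * Complex.I) ∂μ
             = ∫ b, Complex.exp (((u * b.1 + v * b.2 : ℝ) : ℂ) * Complex.I) ∂μ' := by
  classical
  set G : (ℝ × ℝ) × ℝ → ℝ × ℝ := fun p => (p.1.1 + p.1.2 * p.2, p.2) with hGdef
  have hGmeas : Measurable G :=
    ((measurable_fst.comp measurable_fst).add
      ((measurable_snd.comp measurable_fst).mul measurable_snd)).prodMk measurable_snd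
  have hGcont : Continuous G :=
    ((continuous_fst.comp continuous_fst).add
      ((continuous_snd.comp continuous_fst).mul continuous_snd)).prodMk continuous_snd
  -- slice characteristic functions
  set c : Measure (ℝ × ℝ) → ℝ → ℝ → ℂ :=
    fun κ t w => ∫ b, Complex.exp (((t * (b.1 + b.2 * w) : ℝ) : ℂ) * Complex.I) ∂κ with hcdef
  have hcont : ∀ (κ : Measure (ℝ × ℝ)), IsProbabilityMeasure κ → ∀ t,
      Continuous fun w => c κ t w := by
    intro κ hκ t
    apply aux_cont_char (g := fun w (b : ℝ × ℝ) => t * (b.1 + b.2 * w))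
    · intro w
      exact (Complex.continuous_exp.comp ((Complex.continuous_ofReal.comp
        (continuous_const.mul (continuous_fst.add (continuous_snd.mul continuous_const)))).mul
          continuous_const)).aestronglyMeasurable
    · intro b
      exact continuous_const.mul (continuous_const.add (continuous_const.mul continuous_id))
  have hnorm : ∀ (κ : Measure (ℝ × ℝ)), IsProbabilityMeasure κ → ∀ t w, ‖c κ t w‖ ≤ 1 := by
    intro κ hκ t w
    exact aux_norm_char_le (μ := κ) (fun b => t * (b.1 + b.2 * w))
  -- step 1 : slice characteristic functions agree at every w
  have step1 : ∀ t w, c μ t w = c μ' t w := by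
    intro t w₀
    set h : ℝ → ℂ := fun w => c μ t w - c μ' t w with hhdef
    have hhc : Continuous h := (hcont μ inferInstance t).sub (hcont μ' inferInstance t)
    have hhb : ∀ w, ‖h w‖ ≤ 2 := fun w => by
      calc ‖c μ t w - c μ' t w‖ ≤ ‖c μ t w‖ + ‖c μ' t w‖ := norm_sub_le _ _
        _ ≤ 2 := by linarith [hnorm μ inferInstance t w, hnorm μ' inferInstance t w]
    -- test the joint law against the function (y, w) ↦ exp(ity) conj(h w)
    set f : ℝ × ℝ → ℂ := fun p => Complex.exp (((t * p.1 : ℝ) : ℂ) * Complex.I)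
      * (starRingEnd ℂ) (h p.2) with hfdef
    have hfc : Continuous f := by
      apply Continuous.mul
      · exact Complex.continuous_exp.comp ((Complex.continuous_ofReal.comp
          (continuous_const.mul continuous_fst)).mul continuous_const)
      · exact Complex.continuous_conj.comp (hhc.comp continuous_snd)
    have hfb : ∀ p, ‖f p‖ ≤ 2 := fun p => by
      rw [hfdef]
      simp only [norm_mul, RingHomIsometric.norm_map]
      calc _ ≤ 1 * ‖h p.2‖ := by
            gcongr
            simp [Complex.norm_exp]
        _ ≤ 2 := by simpa using hhb p.2
    -- compute the integral of f against the joint law, for each coefficient measure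
    have compute : ∀ κ : Measure (ℝ × ℝ), IsProbabilityMeasure κ →
        ∫ p, f p ∂((κ.prod ν).map G) = ∫ w, c κ t w * (starRingEnd ℂ) (h w) ∂ν := by
      intro κ hκ
      rw [integral_map hGmeas.aemeasurable hfc.aestronglyMeasurable]
      have hfG : ∀ p : (ℝ × ℝ) × ℝ, f (G p)
          = Complex.exp (((t * (p.1.1 + p.1.2 * p.2) : ℝ) : ℂ) * Complex.I)
            * (starRingEnd ℂ) (h p.2) := fun p => rfl
      have hint : Integrable (fun p => f (G p)) (κ.prod ν) :=
        aux_bdd_integrable (hfc.comp hGcont).aestronglyMeasurable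
          (fun p => hfb (G p))
      rw [integral_prod_symm _ hint]
      congr 1
      ext w
      have : ∀ b : ℝ × ℝ, f (G (b, w))
          = Complex.exp (((t * (b.1 + b.2 * w) : ℝ) : ℂ) * Complex.I)
            * (starRingEnd ℂ) (h w) := fun b => rfl
      simp only [this]
      have := integral_smul_const (μ := κ)
        (f := fun b : ℝ × ℝ => Complex.exp (((t * (b.1 + b.2 * w) : ℝ) : ℂ) * Complex.I))
        ((starRingEnd ℂ) (h w))
      simpa [smul_eq_mul, hcdef] using this
    have hzero : ∫ w, h w * (starRingEnd ℂ) (h w) ∂ν = 0 := by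
      have e1 := compute μ inferInstance
      have e2 := compute μ' inferInstance
      rw [hj] at e1
      have hsub : ∫ w, (c μ t w * (starRingEnd ℂ) (h w) - c μ' t w * (starRingEnd ℂ) (h w)) ∂ν
          = 0 := by
        rw [integral_sub, ← e1, ← e2, sub_self]
        · refine aux_bdd_integrable ?_ (C := 2) (fun w => ?_)
          · exact ((hcont μ inferInstance t).mul
              (Complex.continuous_conj.comp hhc)).aestronglyMeasurable
          · rw [norm_mul, RingHomIsometric.norm_map]
            exact le_trans (mul_le_mul (hnorm μ inferInstance t w) (hhb w) (norm_nonneg _)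
              zero_le_one) (by norm_num)
        · refine aux_bdd_integrable ?_ (C := 2) (fun w => ?_)
          · exact ((hcont μ' inferInstance t).mul
              (Complex.continuous_conj.comp hhc)).aestronglyMeasurable
          · rw [norm_mul, RingHomIsometric.norm_map]
            exact le_trans (mul_le_mul (hnorm μ' inferInstance t w) (hhb w) (norm_nonneg _)
              zero_le_one) (by norm_num)
      rw [← hsub]
      congr 1
      ext w
      rw [hhdef]
      ring
    have haez : ∀ᵐ w ∂ν, ‖h w‖ ^ 2 = 0 := by
      have he : ∀ w, h w * (starRingEnd ℂ) (h w) = ((‖h w‖ ^ 2 : ℝ) : ℂ) := fun w => by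
        have hns : Complex.normSq (h w) = ‖h w‖ ^ 2 := by
          rw [Complex.normSq_eq_norm_sq]
        rw [Complex.mul_conj, hns]
      rw [show (fun w => h w * (starRingEnd ℂ) (h w)) = fun w => ((‖h w‖ ^ 2 : ℝ) : ℂ) from
        funext he] at hzero
      have : ∫ w, (‖h w‖ ^ 2 : ℝ) ∂ν = 0 := by
        have h1 : (∫ w, ((‖h w‖ ^ 2 : ℝ) : ℂ) ∂ν) = ((∫ w, (‖h w‖ ^ 2 : ℝ) ∂ν : ℝ) : ℂ) :=
          integral_ofReal
        rw [h1] at hzero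
        exact_mod_cast hzero
      have hi : Integrable (fun w => (‖h w‖ ^ 2 : ℝ)) ν :=
        aux_bdd_integrable (hhc.norm.pow 2).aestronglyMeasurable (C := 4) (fun w => by
          have := hhb w
          rw [Real.norm_eq_abs, _root_.abs_of_nonneg (by positivity)]
          nlinarith [norm_nonneg (h w)])
      exact (integral_eq_zero_iff_of_nonneg (fun w => by positivity) hi).mp this
    -- full support: h vanishes everywhere
    have hzero_all : ∀ w, h w = 0 := by
      by_contra hcon
      push_neg at hcon
      obtain ⟨w₁, hw₁⟩ := hcon
      have hopen : IsOpen {w : ℝ | h w = 0}ᶜ := (isClosed_eq hhc continuous_const).isOpen_compl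
      have hpos := hs _ hopen ⟨w₁, hw₁⟩
      have hnull : ν {w : ℝ | h w = 0}ᶜ = 0 := by
        have hae := haez
        rw [MeasureTheory.ae_iff] at hae
        refine measure_mono_null (fun w hw => ?_) hae
        simp only [Set.mem_compl_iff, Set.mem_setOf_eq] at hw ⊢
        exact fun hc => hw (norm_eq_zero.mp ((pow_eq_zero_iff (two_ne_zero)).mp hc))
      rw [hnull] at hpos
      exact lt_irrefl 0 hpos
    have := hzero_all w₀
    rw [hhdef] at this
    exact sub_eq_zero.mp this
  -- step 2 : from slices to the full characteristic function, by density
  intro u v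
  set Φ : Measure (ℝ × ℝ) → ℝ × ℝ → ℂ :=
    fun κ q => ∫ b, Complex.exp (((q.1 * b.1 + q.2 * b.2 : ℝ) : ℂ) * Complex.I) ∂κ with hΦdef
  have hΦcont : ∀ (κ : Measure (ℝ × ℝ)), IsProbabilityMeasure κ → Continuous (Φ κ) := by
    intro κ hκ
    apply aux_cont_char (g := fun (q : ℝ × ℝ) (b : ℝ × ℝ) => q.1 * b.1 + q.2 * b.2)
    · intro q
      exact (Complex.continuous_exp.comp ((Complex.continuous_ofReal.comp
        ((continuous_const.mul continuous_fst).add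
          (continuous_const.mul continuous_snd))).mul continuous_const)).aestronglyMeasurable
    · intro b
      exact (continuous_fst.mul continuous_const).add (continuous_snd.mul continuous_const)
  have hdense : Dense {q : ℝ × ℝ | q.1 ≠ 0} := by
    intro q
    rcases eq_or_ne q.1 0 with hq | hq
    · have htd : Tendsto (fun n : ℕ => ((1 / (n + 1) : ℝ), q.2)) atTop (𝓝 (0, q.2)) :=
        tendsto_one_div_add_atTop_nhds_zero_nat.prodMk_nhds tendsto_const_nhds
      have : (0, q.2) = q := by
        rw [← hq]
      rw [← this]
      refine mem_closure_of_tendsto htd (Filter.Eventually.of_forall fun n => ?_)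
      simp only [Set.mem_setOf_eq]
      positivity
    · exact subset_closure hq
  have heq : Set.EqOn (Φ μ) (Φ μ') {q : ℝ × ℝ | q.1 ≠ 0} := by
    intro q hq
    have hexp : ∀ b : ℝ × ℝ, (((q.1 * b.1 + q.2 * b.2 : ℝ) : ℂ) * Complex.I)
        = (((q.1 * (b.1 + b.2 * (q.2 / q.1)) : ℝ) : ℂ) * Complex.I) := by
      intro b
      congr 1
      norm_cast
      rw [mul_add, mul_comm b.2 (q.2 / q.1), ← mul_assoc, mul_div_cancel₀ _ hq]
    have e1 : Φ μ q = c μ q.1 (q.2 / q.1) := by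
      rw [hΦdef, hcdef]
      simp only []
      congr 1
      ext b
      rw [hexp b]
    have e2 : Φ μ' q = c μ' q.1 (q.2 / q.1) := by
      rw [hΦdef, hcdef]
      simp only []
      congr 1
      ext b
      rw [hexp b]
    rw [e1, e2, step1]
  have := Continuous.ext_on hdense (hΦcont μ inferInstance) (hΦcont μ' inferInstance) heq
  exact congrFun this (u, v)

end AuxCW


/-- Identification of the law of the random coefficients: if `B ⊥ W`, `B' ⊥ W'`, the laws of
`W` and `W'` coincide and have full support, and the joint laws of `(B₀ + B₁·W, W)` and
`(B'₀ + B'₁·W', W')` coincide, then the laws of `B` and `B'` coincide. -/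
theorem stmt_3
    {Ω Ω' : Type*} [MeasurableSpace Ω] [MeasurableSpace Ω']
    {P : Measure Ω} {P' : Measure Ω'} [IsProbabilityMeasure P] [IsProbabilityMeasure P']
    {B : Ω → ℝ × ℝ} {W : Ω → ℝ} {B' : Ω' → ℝ × ℝ} {W' : Ω' → ℝ}
    (hB : Measurable B) (hW : Measurable W) (hB' : Measurable B') (hW' : Measurable W')
    (hindep : IndepFun B W P) (hindep' : IndepFun B' W' P')
    (hlawW : P.map W = P'.map W')
    (hsupp : ∀ U : Set ℝ, IsOpen U → U.Nonempty → 0 < P.map W U)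
    (hjoint : P.map (fun ω => ((B ω).1 + (B ω).2 * W ω, W ω))
            = P'.map (fun ω => ((B' ω).1 + (B' ω).2 * W' ω, W' ω))) :
    P.map B = P'.map B' := by
  haveI I1 : IsProbabilityMeasure (P.map B) := Measure.isProbabilityMeasure_map hB.aemeasurable
  haveI I2 : IsProbabilityMeasure (P.map W) := Measure.isProbabilityMeasure_map hW.aemeasurable
  haveI I3 : IsProbabilityMeasure (P'.map B') := Measure.isProbabilityMeasure_map hB'.aemeasurable
  set G : (ℝ × ℝ) × ℝ → ℝ × ℝ := fun p => (p.1.1 + p.1.2 * p.2, p.2) with hGdef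
  have hGmeas : Measurable G :=
    ((measurable_fst.comp measurable_fst).add
      ((measurable_snd.comp measurable_fst).mul measurable_snd)).prodMk measurable_snd
  have hmap1 : P.map (fun ω => ((B ω).1 + (B ω).2 * W ω, W ω))
      = ((P.map B).prod (P.map W)).map G := by
    rw [← (indepFun_iff_map_prod_eq_prod_map_map hB.aemeasurable hW.aemeasurable).mp hindep,
      Measure.map_map hGmeas (hB.prodMk hW)]
    rfl
  have hmap2 : P'.map (fun ω => ((B' ω).1 + (B' ω).2 * W' ω, W' ω))
      = ((P'.map B').prod (P.map W)).map G := by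
    rw [hlawW,
      ← (indepFun_iff_map_prod_eq_prod_map_map hB'.aemeasurable hW'.aemeasurable).mp hindep',
      Measure.map_map hGmeas (hB'.prodMk hW')]
    rfl
  have hj : ((P.map B).prod (P.map W)).map G = ((P'.map B').prod (P.map W)).map G := by
    rw [← hmap1, ← hmap2]
    exact hjoint
  have hchar2 := aux_char2_eq (μ := P.map B) (μ' := P'.map B') (ν := P.map W) hsupp hj
  set m : (ℝ × ℝ) ≃ᵐ EuclideanSpace ℝ (Fin 2) :=
    (MeasurableEquiv.piFinTwo (fun _ : Fin 2 => ℝ)).symm.trans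
      (MeasurableEquiv.toLp 2 (Fin 2 → ℝ)) with hmdef
  have hminner : ∀ (b : ℝ × ℝ) (ξ : EuclideanSpace ℝ (Fin 2)),
      ⟪m b, ξ⟫ = b.1 * ξ 0 + b.2 * ξ 1 := by
    intro b ξ
    simp [hmdef, PiLp.inner_apply, RCLike.inner_apply, Fin.sum_univ_two,
      MeasurableEquiv.piFinTwo, MeasurableEquiv.toLp, MeasurableEquiv.trans,
      MeasurableEquiv.symm, piFinTwoEquiv]
    ring
  apply MeasurableEquiv.map_measurableEquiv_injective m
  haveI : IsProbabilityMeasure ((P.map B).map m) :=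
    Measure.isProbabilityMeasure_map m.measurable.aemeasurable
  haveI : IsProbabilityMeasure ((P'.map B').map m) :=
    Measure.isProbabilityMeasure_map m.measurable.aemeasurable
  apply aux_ext_of_char
  intro ξ
  have hcξ : Continuous fun x : EuclideanSpace ℝ (Fin 2) =>
      Complex.exp (((2 * Real.pi * ⟪x, ξ⟫ : ℝ) : ℂ) * Complex.I) :=
    Complex.continuous_exp.comp ((Complex.continuous_ofReal.comp
      (continuous_const.mul ((continuous_inner (𝕜 := ℝ)).comp
        (continuous_id.prodMk continuous_const)))).mul continuous_const)
  rw [integral_map m.measurable.aemeasurable hcξ.aestronglyMeasurable,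
      integral_map m.measurable.aemeasurable hcξ.aestronglyMeasurable]
  have hre : ∀ b : ℝ × ℝ, ((2 * Real.pi * ⟪m b, ξ⟫ : ℝ) : ℂ) * Complex.I
      = (((2 * Real.pi * ξ 0) * b.1 + (2 * Real.pi * ξ 1) * b.2 : ℝ) : ℂ) * Complex.I := by
    intro b
    rw [hminner]
    ring_nf
  calc ∫ b, Complex.exp (((2 * Real.pi * ⟪m b, ξ⟫ : ℝ) : ℂ) * Complex.I) ∂(P.map B)
      = ∫ b, Complex.exp ((((2 * Real.pi * ξ 0) * b.1 + (2 * Real.pi * ξ 1) * b.2 : ℝ) : ℂ)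
          * Complex.I) ∂(P.map B) := by
        congr 1; ext b; rw [hre b]
    _ = ∫ b, Complex.exp ((((2 * Real.pi * ξ 0) * b.1 + (2 * Real.pi * ξ 1) * b.2 : ℝ) : ℂ)
          * Complex.I) ∂(P'.map B') := hchar2 _ _
    _ = ∫ b, Complex.exp (((2 * Real.pi * ⟪m b, ξ⟫ : ℝ) : ℂ) * Complex.I) ∂(P'.map B') := by
        congr 1; ext b; rw [hre b]
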